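/- Let P be a pMDP over states S and actions A, with region r (bounds a, b) well-defined for P, T ⊆ S a target set, s₀ ∈ S and λ ∈ ℝ. For u ∈ r let Vmax(u) be the maximal reachability value vector of the MDP whose rows at each s ∉ T are { (s' ↦ P u s α s') | α ∈ Act(s) }, assumed to exist. Let w be the pointwise-least nonnegative function on S ⊕ (S × A) satisfying: w (Sum.inl s) = 1 for s ∈ T; w (Sum.inl s) = max_{α ∈ Act(s)} w (Sum.inr (s, α)) for s ∉ T; w (Sum.inr (s, α)) = max over vertices v of r of ∑_{s'} P v s α s' · w (Sum.inl s') for α ∈ Act(s); and w (Sum.inr (s, α)) = 0 for α ∉ Act(s); assumed to exist. If w (Sum.inl s₀) ≤ λ, then Vmax(u) s₀ ≤ λ for every u ∈ r. -/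

import Mathlib

open Finset

/-- A multi-affine function on valuations. -/
def MultiAffine {V : Type*} [DecidableEq V] (f : (V → ℝ) → ℝ) : Prop :=
  ∀ (x : V) (u : V → ℝ), ∃ c d : ℝ, ∀ t : ℝ, f (Function.update u x t) = c * t + d

/-- Membership of a valuation in the region with bounds `a`, `b`. -/
def InRegion {V : Type*} (a b u : V → ℝ) : Prop := ∀ x, a x ≤ u x ∧ u x ≤ b x

/-- A vertex of the region with bounds `a`, `b`. -/
def IsVertex {V : Type*} (a b v : V → ℝ) : Prop := ∀ x, v x = a x ∨ v x = b x

/-- The region with bounds `a`, `b` is well-defined for the pMDP `(Act, P)`. -/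
def PMDPWellDef {V S A : Type*} [Fintype S] (Act : S → Set A)
    (P : (V → ℝ) → S → A → S → ℝ) (a b : V → ℝ) : Prop :=
  (∀ u, InRegion a b u → ∀ s, ∀ α ∈ Act s,
      (∀ s', 0 ≤ P u s α s') ∧ ∑ s', P u s α s' = 1) ∧
    ∀ s, ∀ α ∈ Act s, ∀ s',
      (∀ u, InRegion a b u → P u s α s' = 0) ∨ ∀ u, InRegion a b u → 0 < P u s α s'

/-- The rows of the MDP obtained by instantiating the pMDP at valuation `u`. -/
def ActRows {V S A : Type*} (Act : S → Set A) (P : (V → ℝ) → S → A → S → ℝ)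
    (u : V → ℝ) (s : S) : Set (S → ℝ) :=
  {row | ∃ α ∈ Act s, row = fun s' => P u s α s'}

/-- A solution of the maximal-reachability equation system of an MDP given by `Rows`. -/
def MaxSol {S : Type*} [Fintype S] (Rows : S → Set (S → ℝ)) (T : Set S) (v : S → ℝ) :
    Prop :=
  (∀ s, 0 ≤ v s) ∧ (∀ s ∈ T, v s = 1) ∧
    ∀ s ∉ T, IsGreatest ((fun row => ∑ s', row s' * v s') '' Rows s) (v s)

/-- `v` is the maximal reachability value vector: the pointwise-least such solution. -/
def IsMaxVec {S : Type*} [Fintype S] (Rows : S → Set (S → ℝ)) (T : Set S) (v : S → ℝ) :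
    Prop :=
  MaxSol Rows T v ∧ ∀ v', MaxSol Rows T v' → ∀ s, v s ≤ v' s

/-- A solution of the equation system of the substitution stochastic game in which both
the player choosing enabled actions and the player choosing vertex valuations maximize. -/
def GameSolMaxMax {V S A : Type*} [Fintype S] (Act : S → Set A) (T : Set S)
    (a b : V → ℝ) (P : (V → ℝ) → S → A → S → ℝ) (w : S ⊕ (S × A) → ℝ) : Prop :=
  (∀ t, 0 ≤ w t) ∧
    (∀ s ∈ T, w (Sum.inl s) = 1) ∧
    (∀ s ∉ T, IsGreatest ((fun α => w (Sum.inr (s, α))) '' Act s) (w (Sum.inl s))) ∧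
    (∀ s, ∀ α ∈ Act s,
      IsGreatest ((fun v => ∑ s', P v s α s' * w (Sum.inl s')) '' {v | IsVertex a b v})
        (w (Sum.inr (s, α)))) ∧
    ∀ s α, α ∉ Act s → w (Sum.inr (s, α)) = 0

lemma multiAffine_comb {V S : Type*} [DecidableEq V] [Fintype S]
    (f : S → (V → ℝ) → ℝ) (hf : ∀ s, MultiAffine (f s)) (k : S → ℝ) :
    MultiAffine (fun u => ∑ s, f s u * k s) := by
  intro x u
  choose c d hcd using fun s => hf s x u
  refine ⟨∑ s, c s * k s, ∑ s, d s * k s, fun t => ?_⟩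
  have : ∀ s, f s (Function.update u x t) * k s = c s * k s * t + d s * k s := by
    intro s; rw [hcd]; ring
  show ∑ s, f s (Function.update u x t) * k s = _
  rw [Finset.sum_congr rfl fun s _ => this s, Finset.sum_add_distrib, ← Finset.sum_mul]

lemma exists_vertex_le {V : Type*} [Fintype V] [DecidableEq V]
    (a b : V → ℝ) (hab : ∀ x, a x ≤ b x)
    (f : (V → ℝ) → ℝ) (hf : MultiAffine f)
    (u : V → ℝ) (hu : InRegion a b u) :
    ∃ v, IsVertex a b v ∧ f u ≤ f v := by
  have key : ∀ (F : Finset V) (u : V → ℝ), InRegion a b u →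
      (∀ x ∉ F, u x = a x ∨ u x = b x) → ∃ v, IsVertex a b v ∧ f u ≤ f v := by
    intro F
    induction F using Finset.induction_on with
    | empty => intro u hu hout; exact ⟨u, fun x => hout x (by simp), le_refl _⟩
    | @insert x F hx ih =>
      intro u hu hout
      obtain ⟨c, d, hcd⟩ := hf x u
      set t : ℝ := if 0 ≤ c then b x else a x with ht
      have htv : t = a x ∨ t = b x := by
        by_cases h : 0 ≤ c <;> simp [ht, h]
      have hle : f u ≤ f (Function.update u x t) := by
        have h1 : f u = c * u x + d := by
          rw [← hcd (u x), Function.update_eq_self]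
        rw [h1, hcd]
        have := hu x
        by_cases h : 0 ≤ c
        · simp only [ht, if_pos h]
          exact add_le_add_left (mul_le_mul_of_nonneg_left this.2 h) d
        · simp only [ht, if_neg h]
          exact add_le_add_left (mul_le_mul_of_nonpos_left this.1 (le_of_not_ge h)) d
      have hu' : InRegion a b (Function.update u x t) := by
        intro y
        rcases eq_or_ne y x with rfl | hne
        · simp only [Function.update_self]
          rcases htv with h | h <;> rw [h] <;> exact ⟨by simp [hab y], by simp [hab y]⟩
        · rw [Function.update_of_ne hne]; exact hu y
      have hout' : ∀ y ∉ F, Function.update u x t y = a y ∨ Function.update u x t y = b y := by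
        intro y hy
        rcases eq_or_ne y x with rfl | hne
        · simpa using htv
        · rw [Function.update_of_ne hne]
          exact hout y (by simp [hy, hne])
      obtain ⟨v, hv1, hv2⟩ := ih _ hu' hout'
      exact ⟨v, hv1, hle.trans hv2⟩
  exact key Finset.univ u hu (fun x hx => absurd (Finset.mem_univ x) hx)

/-- If the value of the substitution game (both players maximizing) at `s₀`
is at most `lam`, then the maximal reachability value of every instantiated MDP over the
region is at most `lam` at `s₀`. -/
theorem substitution_game_upper_bound
    {V S A : Type*} [Fintype V] [Nonempty V] [DecidableEq V]
    [Fintype S] [Nonempty S] [Fintype A]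
    (Act : S → Set A) (hAct : ∀ s, (Act s).Nonempty)
    (P : (V → ℝ) → S → A → S → ℝ)
    (hma : ∀ s α s', MultiAffine fun u => P u s α s')
    (a b : V → ℝ) (hab : ∀ x, a x ≤ b x)
    (hwd : PMDPWellDef Act P a b)
    (T : Set S) (s₀ : S) (lam : ℝ)
    (Vmax : (V → ℝ) → S → ℝ)
    (hVmax : ∀ u, InRegion a b u → IsMaxVec (ActRows Act P u) T (Vmax u))
    (w : S ⊕ (S × A) → ℝ)
    (hw : GameSolMaxMax Act T a b P w ∧
      ∀ w', GameSolMaxMax Act T a b P w' → ∀ t, w t ≤ w' t)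
    (hbound : w (Sum.inl s₀) ≤ lam) :
    ∀ u, InRegion a b u → Vmax u s₀ ≤ lam := by
  intro u hu
  classical
  obtain ⟨⟨hw0, hwT, hwS, hwSA, hwnot⟩, _⟩ := hw
  have hProw := hwd.1 u hu
  set ActF : S → Finset A := fun s => (Set.toFinite (Act s)).toFinset with hActF_def
  have hmemF : ∀ s α, α ∈ ActF s ↔ α ∈ Act s := fun s α => Set.Finite.mem_toFinset _
  have hActF : ∀ s, (ActF s).Nonempty := fun s => by
    obtain ⟨α, hα⟩ := hAct s; exact ⟨α, (hmemF s α).2 hα⟩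
  set F : (S → ℝ) → S → ℝ := fun v s =>
    if s ∈ T then 1 else (ActF s).sup' (hActF s) (fun α => ∑ s', P u s α s' * v s')
    with hF_def
  have Fmono : ∀ v v' : S → ℝ, (∀ s, v s ≤ v' s) → ∀ s, F v s ≤ F v' s := by
    intro v v' h s
    by_cases hs : s ∈ T
    · simp [hF_def, hs]
    · simp only [hF_def, if_neg hs]
      apply Finset.sup'_mono_fun
      intro α hα
      exact Finset.sum_le_sum fun s' _ =>
        mul_le_mul_of_nonneg_left (h s') ((hProw s α ((hmemF s α).1 hα)).1 s')
  set wbar : S → ℝ := fun s => w (Sum.inl s) with hwbar_def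
  have hstep0 : ∀ s, F wbar s ≤ wbar s := by
    intro s
    by_cases hs : s ∈ T
    · simp [hF_def, hs, hwbar_def, hwT s hs]
    · simp only [hF_def, if_neg hs]
      apply Finset.sup'_le
      intro α hα
      have hαA : α ∈ Act s := (hmemF s α).1 hα
      obtain ⟨v, hv, hfv⟩ := exists_vertex_le a b hab _
        (multiAffine_comb _ (fun s' => hma s α s') wbar) u hu
      have h1 : (∑ s', P v s α s' * wbar s') ≤ w (Sum.inr (s, α)) :=
        (hwSA s α hαA).2 (Set.mem_image_of_mem _ hv)
      have h2 : w (Sum.inr (s, α)) ≤ wbar s :=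
        (hwS s hs).2 (Set.mem_image_of_mem _ hαA)
      exact le_trans (le_trans hfv h1) h2
  set g : ℕ → S → ℝ := fun n => F^[n] wbar with hg_def
  have hgsucc : ∀ n, g (n + 1) = F (g n) := fun n => Function.iterate_succ_apply' F n wbar
  have hgstep : ∀ n s, g (n + 1) s ≤ g n s := by
    intro n
    induction n with
    | zero => intro s; rw [hgsucc]; exact hstep0 s
    | succ n ih =>
      intro s
      rw [hgsucc (n + 1), hgsucc n]
      exact Fmono _ _ (fun s' => by rw [← hgsucc n]; exact ih s') s
  have hganti : ∀ m n, m ≤ n → ∀ s, g n s ≤ g m s := by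
    intro m n h
    induction n, h using Nat.le_induction with
    | base => exact fun s => le_rfl
    | succ n hmn ih => exact fun s => (hgstep n s).trans (ih s)
  have hFnn : ∀ v : S → ℝ, (∀ s, 0 ≤ v s) → ∀ s, 0 ≤ F v s := by
    intro v hv s
    by_cases hs : s ∈ T
    · simp [hF_def, hs]
    · simp only [hF_def, if_neg hs]
      obtain ⟨α, hα⟩ := hActF s
      refine le_trans ?_ (Finset.le_sup' _ hα)
      exact Finset.sum_nonneg fun s' _ =>
        mul_nonneg ((hProw s α ((hmemF s α).1 hα)).1 s') (hv s')
  have hgnn : ∀ n s, 0 ≤ g n s := by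
    intro n
    induction n with
    | zero => exact fun s => hw0 _
    | succ n ih => intro s; rw [hgsucc]; exact hFnn _ ih s
  have hbdd : ∀ s, BddBelow (Set.range fun n => g n s) := by
    intro s
    refine ⟨0, ?_⟩
    rintro x ⟨n, rfl⟩
    exact hgnn n s
  set vst : S → ℝ := fun s => ⨅ n, g n s with hvst_def
  have hvle : ∀ n s, vst s ≤ g n s := fun n s => ciInf_le (hbdd s) n
  have hvnn : ∀ s, 0 ≤ vst s := fun s => le_ciInf fun n => hgnn n s
  have hgT : ∀ n, ∀ s ∈ T, g n s = 1 := by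
    intro n
    induction n with
    | zero => exact hwT
    | succ n ih => intro s hs; rw [hgsucc]; simp [hF_def, hs]
  have hvT : ∀ s ∈ T, vst s = 1 := by
    intro s hs
    have h1 : vst s = ⨅ _ : ℕ, (1 : ℝ) := by
      simp only [hvst_def]
      congr 1
      funext n
      exact hgT n s hs
    rw [h1, ciInf_const]
  have hfix1 : ∀ s, F vst s ≤ vst s := by
    intro s
    refine le_ciInf fun n => ?_
    calc F vst s ≤ F (g n) s := Fmono _ _ (fun s' => hvle n s') s
      _ = g (n + 1) s := (congrFun (hgsucc n) s).symm
      _ ≤ g n s := hgstep n s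
  have hfix2 : ∀ s, vst s ≤ F vst s := by
    intro s
    by_cases hs : s ∈ T
    · rw [hvT s hs]; simp [hF_def, hs]
    refine le_of_forall_pos_le_add fun ε hε => ?_
    have hex : ∀ s' : S, ∃ n, g n s' < vst s' + ε := by
      intro s'
      have h1 : vst s' < vst s' + ε := by linarith
      exact exists_lt_of_ciInf_lt h1
    choose nn hnn using hex
    set N : ℕ := Finset.univ.sup nn with hN
    have hgN : ∀ s', g N s' < vst s' + ε := fun s' =>
      lt_of_le_of_lt (hganti (nn s') N (Finset.le_sup (Finset.mem_univ s')) s') (hnn s')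
    calc vst s ≤ g (N + 1) s := hvle (N + 1) s
      _ = F (g N) s := congrFun (hgsucc N) s
      _ ≤ F vst s + ε := by
          simp only [hF_def, if_neg hs]
          apply Finset.sup'_le
          intro α hα
          have hαA := (hmemF s α).1 hα
          have hP := hProw s α hαA
          have hkey : (∑ s', P u s α s' * g N s') ≤ (∑ s', P u s α s' * vst s') + ε := by
            calc ∑ s', P u s α s' * g N s'
                ≤ ∑ s', P u s α s' * (vst s' + ε) :=
                  Finset.sum_le_sum fun s' _ =>
                    mul_le_mul_of_nonneg_left (le_of_lt (hgN s')) (hP.1 s')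
              _ = (∑ s', P u s α s' * vst s') + (∑ s', P u s α s') * ε := by
                  simp [mul_add, Finset.sum_add_distrib, Finset.sum_mul]
              _ = (∑ s', P u s α s' * vst s') + ε := by rw [hP.2, one_mul]
          refine hkey.trans (add_le_add_left ?_ ε)
          exact Finset.le_sup' (fun α => ∑ s', P u s α s' * vst s') hα
  have hfix : ∀ s, F vst s = vst s := fun s => le_antisymm (hfix1 s) (hfix2 s)
  have hMS : MaxSol (ActRows Act P u) T vst := by
    refine ⟨hvnn, hvT, fun s hs => ?_⟩
    have hv_eq : vst s = (ActF s).sup' (hActF s) (fun α => ∑ s', P u s α s' * vst s') := by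
      rw [← hfix s]; simp [hF_def, hs]
    constructor
    · obtain ⟨α, hα, hval⟩ :=
        Finset.exists_mem_eq_sup' (hActF s) (fun α => ∑ s', P u s α s' * vst s')
      refine ⟨fun s' => P u s α s', ⟨α, (hmemF s α).1 hα, rfl⟩, ?_⟩
      simp only []
      rw [hv_eq, hval]
    · rintro x ⟨row, ⟨α, hαA, rfl⟩, rfl⟩
      rw [hv_eq]
      exact Finset.le_sup' (fun α => ∑ s', P u s α s' * vst s') ((hmemF s α).2 hαA)
  have h1 : Vmax u s₀ ≤ vst s₀ := (hVmax u hu).2 vst hMS s₀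
  have h2 : vst s₀ ≤ wbar s₀ := hvle 0 s₀
  exact h1.trans (h2.trans hbound)
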